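/- arXiv:2008.08174 — 2 statements merged into one kernel-verified Lean document; each statement's English description precedes it below -/
import Mathlib

section
/- Let q ≥ 2, k ≥ 1, let x' ∈ Σ_q^{n'} with n' > k, let a ∈ Σ_q, and let j be a position with k < j ≤ n'. Define x'' = x' + a·e_j (addition modulo q in position j). Then φ̂(x'') = φ̂(x'); moreover, if k < j ≤ n' − k then φ̄(x'') = φ̄(x') + a·e_{j−k} − a·e_j (as vectors in Σ_q^{n'−k}), and if n' − k < j ≤ n' then φ̄(x'') = φ̄(x') + a·e_{j−k}. In particular, such a substitution alters at most two entries of φ̄(x'), at distance exactly k. -/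
open List

namespace NoisyDup

variable {q : ℕ}

/-- Tandem duplication `T_{i,k}`: duplicates the length-`k` substring starting
after position `i` (0-based index `i`), if it exists. -/
def dup (i k : ℕ) (x : List (ZMod q)) : List (ZMod q) :=
  if i + k ≤ x.length then x.take i ++ (x.drop i).take k ++ x.drop i else x

/-- Add `a` (mod `q`) to the entry at 0-based index `i`. -/
def addAt (x : List (ZMod q)) (i : ℕ) (a : ZMod q) : List (ZMod q) :=
  x.set i (x.getD i 0 + a)

/-- One exact tandem duplication of length `k`. -/
def ExactStep (k : ℕ) (x y : List (ZMod q)) : Prop :=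
  ∃ i, i + k ≤ x.length ∧ y = dup i k x

/-- One noisy duplication of length `k`: an exact duplication followed by adding
some `a ≠ 0` to one symbol of the inserted copy (positions are 1-indexed). -/
def NoisyStep (k : ℕ) (x y : List (ZMod q)) : Prop :=
  ∃ (i : ℕ) (a : ZMod q) (j : ℕ), i + k ≤ x.length ∧ a ≠ 0 ∧
    i + k + 1 ≤ j ∧ j ≤ i + 2 * k ∧ y = addAt (dup i k x) (j - 1) a

/-- Descendants by exact duplications only: `D_k^{*(0)}`. -/
def ExactDesc (k : ℕ) (x y : List (ZMod q)) : Prop :=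
  Relation.ReflTransGen (ExactStep k) x y

/-- The descendant cone `D_k^{*(≤1)}`: any number of exact duplications and at
most one noisy duplication. -/
def descCone (k : ℕ) (x : List (ZMod q)) : Set (List (ZMod q)) :=
  {y | ExactDesc k x y ∨ ∃ u v, ExactDesc k x u ∧ NoisyStep k u v ∧ ExactDesc k v y}

/-- `φ̂(x)`: the first `k` symbols. -/
def hatPhi (k : ℕ) (x : List (ZMod q)) : List (ZMod q) := x.take k

/-- `φ̄(x)_i = x_{i+k} - x_i` (1-indexed), a string of length `|x| - k`. -/
def barPhi (k : ℕ) (x : List (ZMod q)) : List (ZMod q) :=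
  (List.range (x.length - k)).map fun i => x.getD (i + k) 0 - x.getD i 0

/-- Auxiliary for `mu`: `cnt` counts the current run of zeros. -/
def muAux (k : ℕ) : ℕ → List (ZMod q) → List (ZMod q)
  | cnt, [] => List.replicate (cnt % k) 0
  | cnt, a :: t =>
      if a = 0 then muAux k (cnt + 1) t
      else List.replicate (cnt % k) 0 ++ a :: muAux k 0 t

/-- `μ(z)`: reduce the length of every maximal run of zeros modulo `k`. -/
def mu (k : ℕ) (z : List (ZMod q)) : List (ZMod q) := muAux k 0 z

/-- `x` contains a tandem repeat of length `k`. -/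
def HasRepeat (k : ℕ) (x : List (ZMod q)) : Prop :=
  ∃ i, i + 2 * k ≤ x.length ∧ (x.drop i).take k = (x.drop (i + k)).take k

/-- `x` is irreducible: it contains no tandem repeat of length `k`. -/
def IsIrreducible (k : ℕ) (x : List (ZMod q)) : Prop := ¬ HasRepeat k x

/-- The duplication root: the (unique) irreducible ancestor of `x` under exact
duplications of length `k`. -/
noncomputable def rt (k : ℕ) (x : List (ZMod q)) : List (ZMod q) :=
  haveI := Classical.propDecidable (∃ z, IsIrreducible k z ∧ ExactDesc k z x)
  if h : ∃ z, IsIrreducible k z ∧ ExactDesc k z x then h.choose else x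

/-- The set of irreducible strings of length `n` over `Σ_q`. -/
def Irr (k n : ℕ) : Set (List (ZMod q)) := {x | x.length = n ∧ IsIrreducible k x}

/-- `ins_k(u, j)`: the subsequence of entries in (1-indexed) positions congruent
to `j` modulo `k`. -/
def splitk (k j : ℕ) (u : List (ZMod q)) : List (ZMod q) :=
  ((u.zipIdx.map Prod.swap).filter fun p => p.1 % k == j - 1).map Prod.snd

/-- The interleaving `inl(u) = ins_k(u,1) ⋯ ins_k(u,k)`. -/
def inl (k : ℕ) (u : List (ZMod q)) : List (ZMod q) :=
  ((List.range k).map fun j => splitk k (j + 1) u).flatten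

/-- The indicator `Γ(z)` of the nonzero entries of `z`. -/
def gamma (z : List (ZMod q)) : List Bool := z.map fun a => decide (a ≠ 0)

/-- The cumulative-sum map (mod `q`). -/
def cusum (z : List (ZMod q)) : List (ZMod q) :=
  (List.range z.length).map fun i => (z.take (i + 1)).sum

/-- Hamming weight of a binary string. -/
def wt (u : List Bool) : ℕ := u.count true

/-- The VT syndrome `Σ i·u_i` (1-indexed). -/
def vtSum (u : List Bool) : ℕ := ((u.zipIdx.map Prod.swap).map fun p => if p.2 then p.1 + 1 else 0).sum

/-- The (variable-length) Varshamov–Tenengolts code. -/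
def CVT (α m : ℕ) : Set (List Bool) := {z | z.length ≤ m - 1 ∧ vtSum z % m = α}

/-- `Σ_{i=1}^{|u|} i · (u_1 + ⋯ + u_i)`. -/
def wSum (u : List Bool) : ℕ :=
  ((List.range u.length).map fun i => (i + 1) * wt (u.take (i + 1))).sum

/-- Tenengolts' binary map `ζ`. -/
def zeta (z : List (ZMod q)) : List Bool :=
  (z.zipIdx.map Prod.swap).map fun p => if p.1 = 0 then true else decide ((z.getD (p.1 - 1) 0).val ≤ p.2.val)

/-- `Σ_{i=1}^{|z|} (i-1)·ζ(z)_i`. -/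
def tqSum (z : List (ZMod q)) : ℕ := (((zeta z).zipIdx.map Prod.swap).map fun p => if p.2 then p.1 else 0).sum

/-- Tenengolts' (variable-length) `q`-ary single-indel-correcting code. -/
def CTq (α β m : ℕ) : Set (List (ZMod q)) :=
  {z | z.length ≤ m ∧ (z.map ZMod.val).sum % q = α ∧ tqSum z % m = β}

/-- The length of `s_j = Γ(ins_k(μ,j))` for a codeword of length `n`
(the number of positions in `{1,…,n-k}` congruent to `j` mod `k`). -/
def sLen (k n j : ℕ) : ℕ := (List.range (n - k)).countP fun i => i % k == j - 1

/-- Admissibility of the parameters of the code `C_nd`. -/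
def Admissible (q k n : ℕ) (a c : ℕ → ℕ) (b a1 a2 a3 a4 b1 b2 b3 b4 : ℕ) : Prop :=
  (∀ j ∈ Finset.Icc 1 k, a j ≤ 2 * (sLen k n j + 1)) ∧
  (∀ j ∈ Finset.Icc 1 k, c j ≤ 2 * sLen k n j) ∧
  b ≤ 4 ∧ a1 ≤ q - 1 ∧ a2 ≤ q - 1 ∧ a3 ≤ q - 1 ∧ a4 ≤ q - 1 ∧
  b1 ≤ (n - k) / 2 ∧ b2 ≤ (n - k) / 2 ∧ b3 ≤ n - k - 1 ∧ b4 ≤ n - k - 1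

/-- The code `C_nd` for the noisy duplication channel. -/
def Cnd (k n : ℕ) (a c : ℕ → ℕ) (b a1 a2 a3 a4 b1 b2 b3 b4 : ℕ) : Set (List (ZMod q)) :=
  {x | x.length = n ∧ IsIrreducible k x ∧
    (∀ j ∈ Finset.Icc 1 k,
        gamma (splitk k j (mu k (barPhi k x))) ∈
          CVT (a j) (2 * (gamma (splitk k j (mu k (barPhi k x)))).length + 3)) ∧
    (∀ j ∈ Finset.Icc 1 k,
        wSum (gamma (splitk k j (mu k (barPhi k x)))) %
          (2 * (gamma (splitk k j (mu k (barPhi k x)))).length + 1) = c j) ∧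
    ((Finset.Icc 1 k).sum fun j => wt (gamma (splitk k j (mu k (barPhi k x))))) % 5 = b ∧
    splitk 2 1 (inl k (mu k (barPhi k x))) ∈ CTq a1 b1 ((n - k + 1) / 2) ∧
    splitk 2 2 (inl k (mu k (barPhi k x))) ∈ CTq a2 b2 ((n - k + 1) / 2) ∧
    cusum (inl k (mu k (barPhi k x))) ∈ CTq a3 b3 (n - k) ∧
    inl k (mu k (barPhi k x)) ∈ CTq a4 b4 (n - k)}

/-- `w` is obtained from `u` by deleting one occurrence of the symbol `b`. -/
def delSymb (u w : List (ZMod q)) (b : ZMod q) : Prop :=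
  ∃ i, i < u.length ∧ u.getD i 0 = b ∧ w = u.eraseIdx i

/-- `w` is obtained from `u` by inserting the symbol `b` at some position. -/
def insOne (u w : List (ZMod q)) (b : ZMod q) : Prop :=
  ∃ i, i ≤ u.length ∧ w = u.take i ++ b :: u.drop i

/-- `w` is obtained from `u` by inserting the adjacent pair `b, c`. -/
def insPair (u w : List (ZMod q)) (b c : ZMod q) : Prop :=
  ∃ i, i ≤ u.length ∧ w = u.take i ++ b :: c :: u.drop i

/-- `w` is obtained from `u` by inserting two `0`s separated by exactly one
(unchanged) symbol of `u`. -/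
def insSpread0 (u w : List (ZMod q)) : Prop :=
  ∃ i, i < u.length ∧ w = u.take i ++ 0 :: u.getD i 0 :: 0 :: u.drop (i + 1)

/-- `w` is obtained from `u` by inserting a nonzero `a` and replacing the
symbol `c` immediately following the insertion point by `c - a`. -/
def insSub (u w : List (ZMod q)) : Prop :=
  ∃ a : ZMod q, a ≠ 0 ∧ ∃ i, i < u.length ∧
    w = u.take i ++ a :: (u.getD i 0 - a) :: u.drop (i + 1)

/-- `w` is obtained from `u` by replacing a single symbol `0` by a nonzero symbol. -/
def subOne (u w : List (ZMod q)) : Prop :=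
  ∃ i, i < u.length ∧ u.getD i 0 = 0 ∧ ∃ a : ZMod q, a ≠ 0 ∧ w = u.set i a

/-- `w` is obtained from `u` by replacing two adjacent symbols `0, c` by
`a, c - a` for some nonzero `a`. -/
def subTwo (u w : List (ZMod q)) : Prop :=
  ∃ i, i + 1 < u.length ∧ u.getD i 0 = 0 ∧ ∃ a : ZMod q, a ≠ 0 ∧
    w = u.take i ++ a :: (u.getD (i + 1) 0 - a) :: u.drop (i + 2)

/-- `w` is obtained from `u` by swapping an adjacent pair `b, 0` (with `b ≠ 0`)
into `0, b`. -/
def swapPair (u w : List (ZMod q)) : Prop :=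
  ∃ i, i + 1 < u.length ∧ u.getD i 0 ≠ 0 ∧ u.getD (i + 1) 0 = 0 ∧
    w = u.take i ++ 0 :: u.getD i 0 :: u.drop (i + 2)

/-- `w` is obtained from `u` by deleting a single symbol. -/
def delQ (u w : List (ZMod q)) : Prop := ∃ i, i < u.length ∧ w = u.eraseIdx i

/-- `w` is obtained from `u` by inserting a single symbol. -/
def insQ (u w : List (ZMod q)) : Prop :=
  ∃ (i : ℕ) (b : ZMod q), i ≤ u.length ∧ w = u.take i ++ b :: u.drop i



lemma getD_set' (x : List (ZMod q)) (i t : ℕ) (v : ZMod q) :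
    (x.set i v).getD t 0 = if t = i ∧ i < x.length then v else x.getD t 0 := by
  simp only [List.getD_eq_getElem?_getD, List.getElem?_set]
  rcases eq_or_ne i t with rfl | h
  · by_cases hl : i < x.length
    · simp [hl]
    · simp [hl, List.getElem?_eq_none (not_lt.1 hl)]
  · simp [h, Ne.symm h, fun hh : t = i => h hh.symm]

lemma take_set' (x : List (ZMod q)) (i k : ℕ) (v : ZMod q) (h : k ≤ i) :
    (x.set i v).take k = x.take k := by
  apply List.ext_getElem?
  intro n
  simp only [List.getElem?_take, List.getElem?_set]
  split <;> [skip; rfl]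
  rename_i hn
  rw [if_neg (by omega)]

lemma getD_addAt (x : List (ZMod q)) (i t : ℕ) (a : ZMod q) :
    (addAt x i a).getD t 0 = if t = i ∧ i < x.length then x.getD i 0 + a else x.getD t 0 :=
  getD_set' x i t _

lemma length_addAt (x : List (ZMod q)) (i : ℕ) (a : ZMod q) :
    (addAt x i a).length = x.length := List.length_set ..

lemma barPhi_length (k : ℕ) (x : List (ZMod q)) :
    (barPhi k x).length = x.length - k := by simp [barPhi]

lemma barPhi_getD (k : ℕ) (x : List (ZMod q)) (t : ℕ) (h : t < x.length - k) :
    (barPhi k x).getD t 0 = x.getD (t + k) 0 - x.getD t 0 := by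
  simp [barPhi, List.getD_eq_getElem?_getD, List.getElem?_map, List.getElem?_range, h]

/-- adding `a` at position `j > k` leaves `φ̂` unchanged and
changes `φ̄` by `+a` at position `j - k` and (if `j ≤ n' - k`) by `-a` at
position `j`. -/
theorem substitution_in_transform_domain
    (q k : ℕ) (hq : 2 ≤ q) (hk : 1 ≤ k) (n' : ℕ) (hn : k < n')
    (x' : List (ZMod q)) (hx : x'.length = n')
    (a : ZMod q) (j : ℕ) (hj1 : k < j) (hj2 : j ≤ n') :
    hatPhi k (addAt x' (j - 1) a) = hatPhi k x' ∧
    (j ≤ n' - k →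
      barPhi k (addAt x' (j - 1) a) =
        addAt (addAt (barPhi k x') (j - k - 1) a) (j - 1) (-a)) ∧
    (n' - k < j →
      barPhi k (addAt x' (j - 1) a) = addAt (barPhi k x') (j - k - 1) a) := by
  obtain ⟨m, rfl⟩ : ∃ m, j = m + 1 := ⟨j - 1, by omega⟩
  obtain ⟨p, rfl⟩ : ∃ p, m = p + k := ⟨m - k, by omega⟩
  have hjm : p + k + 1 - 1 = p + k := by omega
  have hjk : p + k + 1 - k - 1 = p := by omega
  rw [hjm, hjk]
  refine ⟨?_, ?_, ?_⟩
  · unfold hatPhi addAt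
    exact take_set' x' _ k _ (by omega)
  · intro h
    apply List.ext_getElem
    · simp [barPhi_length, length_addAt, hx]
    · intro i h1 h2
      have hi : i < n' - k := by
        simpa [barPhi_length, length_addAt, hx] using h1
      rw [← List.getD_eq_getElem _ 0, ← List.getD_eq_getElem _ 0]
      rw [barPhi_getD k _ i (by simp [length_addAt, hx]; omega)]
      simp only [getD_addAt, length_addAt, barPhi_length, hx]
      rw [barPhi_getD k x' p (by omega), barPhi_getD k x' (p + k) (by omega),
        barPhi_getD k x' i (by omega)]
      rcases eq_or_ne i p with rfl | hne1
      · split_ifs <;> first | (exfalso; omega) | ring1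
      · rcases eq_or_ne i (p + k) with rfl | hne2
        · split_ifs <;> first | (exfalso; omega) | ring1
        · split_ifs <;> first | (exfalso; omega) | ring1
  · intro h
    apply List.ext_getElem
    · simp [barPhi_length, length_addAt, hx]
    · intro i h1 h2
      have hi : i < n' - k := by
        simpa [barPhi_length, length_addAt, hx] using h1
      rw [← List.getD_eq_getElem _ 0, ← List.getD_eq_getElem _ 0]
      rw [barPhi_getD k _ i (by simp [length_addAt, hx]; omega)]
      simp only [getD_addAt, length_addAt, barPhi_length, hx]
      rw [barPhi_getD k x' p (by omega), barPhi_getD k x' i (by omega)]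
      rcases eq_or_ne i p with rfl | hne1
      · split_ifs <;> first | (exfalso; omega) | ring1
      · rcases eq_or_ne i (p + k) with rfl | hne2
        · split_ifs <;> first | (exfalso; omega) | ring1
        · split_ifs <;> first | (exfalso; omega) | ring1


end NoisyDup
end

section
/- Let q ≥ 2, k ≥ 1 and let c₁, c₂ ∈ Σ_q^n with n ≥ k. Then D_k^{*(≤1)}(c₁) ∩ D_k^{*(≤1)}(c₂) = ∅ if and only if rt(c₁) ≠ rt(c₂) and { rt(w) : w ∈ D_k^{*(≤1)}(c₁) } ∩ { rt(w) : w ∈ D_k^{*(≤1)}(c₂) } = ∅. -/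
open List

namespace NoisyDup

variable {q : ℕ}

lemma dup_eq_of_le {k : ℕ} {x : List (ZMod q)} {i : ℕ} (h : i + k ≤ x.length) :
    dup i k x = x.take (i + k) ++ x.drop i := by
  rw [dup, if_pos h, List.take_add, List.append_assoc]

lemma dup_length {k : ℕ} {x : List (ZMod q)} {i : ℕ} (h : i + k ≤ x.length) :
    (dup i k x).length = x.length + k := by
  rw [dup_eq_of_le h]
  simp only [List.length_append, List.length_take, List.length_drop]
  omega

lemma dup_comm {k : ℕ} {x : List (ZMod q)} {i i' : ℕ} (hii : i ≤ i') (h' : i' + k ≤ x.length) :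
    dup i k (dup i' k x) = dup (i' + k) k (dup i k x) := by
  have h : i + k ≤ x.length := by omega
  have l1 : (dup i' k x).length = x.length + k := dup_length h'
  have l2 : (dup i k x).length = x.length + k := dup_length h
  rw [dup_eq_of_le (x := dup i' k x) (by omega), dup_eq_of_le (x := dup i k x) (by omega),
    dup_eq_of_le h, dup_eq_of_le h']
  have lt1 : (x.take (i' + k)).length = i' + k := by simp; omega
  have lt2 : (x.take (i + k)).length = i + k := by simp; omega
  rw [List.take_append, List.drop_append,
    List.take_append, List.drop_append, lt1, lt2]
  have e1 : (x.take (i' + k)).take (i + k) = x.take (i + k) := by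
    rw [List.take_take]; congr 1; omega
  have e2 : (x.drop i').take (i + k - (i' + k)) = [] := by
    rw [Nat.sub_eq_zero_of_le (by omega)]; rfl
  have e3 : (x.drop i').drop (i - (i' + k)) = x.drop i' := by
    rw [Nat.sub_eq_zero_of_le (by omega)]; rfl
  have e4 : (x.take (i + k)).take (i' + k + k) = x.take (i + k) := by
    rw [List.take_take]; congr 1; omega
  have e5 : (x.take (i + k)).drop (i' + k) = [] := by
    apply List.drop_eq_nil_of_le; omega
  have e6 : (x.drop i).drop (i' + k - (i + k)) = x.drop i' := by
    rw [List.drop_drop]; congr 1; omega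
  rw [e1, e2, e3, e4, e5, e6]
  have e7 : (x.take (i' + k)).drop i = (x.drop i).take (i' + k + k - (i + k)) := by
    rw [List.drop_take]; congr 1; omega
  rw [e7]; simp

lemma diamond {k : ℕ} (x y z : List (ZMod q)) (hxy : ExactStep k x y) (hxz : ExactStep k x z) :
    ∃ w, Relation.ReflGen (ExactStep k) y w ∧ Relation.ReflTransGen (ExactStep k) z w := by
  obtain ⟨i, hi, rfl⟩ := hxy
  obtain ⟨i', hi', rfl⟩ := hxz
  rcases le_total i i' with hii | hii
  · refine ⟨dup (i' + k) k (dup i k x), Relation.ReflGen.single ⟨i' + k, ?_, rfl⟩,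
      Relation.ReflTransGen.single ⟨i, ?_, (dup_comm hii hi').symm⟩⟩
    · rw [dup_length hi]; omega
    · rw [dup_length hi']; omega
  · refine ⟨dup i' k (dup i k x), Relation.ReflGen.single ⟨i', ?_, rfl⟩,
      Relation.ReflTransGen.single ⟨i + k, ?_, dup_comm hii hi⟩⟩
    · rw [dup_length hi]; omega
    · rw [dup_length hi']; omega

lemma exists_root (k : ℕ) (hk : 1 ≤ k) : ∀ w : List (ZMod q),
    ∃ z, IsIrreducible k z ∧ ExactDesc k z w := by
  intro w
  by_cases hw : HasRepeat k w
  · obtain ⟨i, hi, heq⟩ := hw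
    have hlen : (w.take (i + k) ++ w.drop (i + 2 * k)).length = w.length - k := by
      simp only [List.length_append, List.length_take, List.length_drop]; omega
    have hik : i + k ≤ (w.take (i + k) ++ w.drop (i + 2 * k)).length := by
      rw [hlen]; omega
    have hdup : dup i k (w.take (i + k) ++ w.drop (i + 2 * k)) = w := by
      rw [dup_eq_of_le hik]
      have t1 : (w.take (i + k) ++ w.drop (i + 2 * k)).take (i + k) = w.take (i + k) := by
        have B : (i + k) - (w.take (i + k)).length = 0 := by simp; omega
        rw [List.take_append, List.take_take, min_self, B, List.take_zero,
          List.append_nil]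
      have t2 : (w.take (i + k) ++ w.drop (i + 2 * k)).drop i
          = (w.drop i).take k ++ w.drop (i + 2 * k) := by
        have A : i + k - i = k := by omega
        have B : i - (w.take (i + k)).length = 0 := by simp; omega
        rw [List.drop_append, List.drop_take, A, B, List.drop_zero]
      rw [t1, t2, heq]
      have t3 : w.drop (i + 2 * k) = (w.drop (i + k)).drop k := by
        rw [List.drop_drop]; congr 1; omega
      rw [t3, List.take_append_drop, List.take_append_drop]
    obtain ⟨z, hz1, hz2⟩ := exists_root k hk (w.take (i + k) ++ w.drop (i + 2 * k))
    exact ⟨z, hz1, hz2.tail ⟨i, hik, hdup.symm⟩⟩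
  · exact ⟨w, hw, Relation.ReflTransGen.refl⟩
termination_by w => w.length
decreasing_by rw [hlen]; omega

lemma rt_spec {k : ℕ} (hk : 1 ≤ k) (w : List (ZMod q)) :
    IsIrreducible k (rt k w) ∧ ExactDesc k (rt k w) w := by
  unfold rt
  split
  · exact (‹∃ z, IsIrreducible k z ∧ ExactDesc k z w›).choose_spec
  · exact absurd (exists_root k hk w) ‹_›

lemma common_of_rt_eq {k : ℕ} (hk : 1 ≤ k) {x y : List (ZMod q)} (h : rt k x = rt k y) :
    ∃ z, ExactDesc k x z ∧ ExactDesc k y z := by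
  have hx := (rt_spec hk x).2
  have hy := (rt_spec hk y).2
  rw [h] at hx
  exact Relation.church_rosser diamond hx hy

lemma cone_closed {k : ℕ} {c w z : List (ZMod q)} (hw : w ∈ descCone k c)
    (h : ExactDesc k w z) : z ∈ descCone k c := by
  rcases hw with hw | ⟨u, v, h1, h2, h3⟩
  · exact Or.inl (hw.trans h)
  · exact Or.inr ⟨u, v, h1, h2, h3.trans h⟩

lemma self_mem_cone {k : ℕ} (c : List (ZMod q)) : c ∈ descCone k c :=
  Or.inl Relation.ReflTransGen.refl

/-- the descendant cones `D_k^{*(≤1)}` of two words are disjoint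
iff their duplication roots differ and the sets of roots of their descendant
cones are disjoint. -/
theorem disjoint_cones_iff_roots
    (q k n : ℕ) (hq : 2 ≤ q) (hk : 1 ≤ k) (hn : k ≤ n)
    (c₁ c₂ : List (ZMod q)) (h1 : c₁.length = n) (h2 : c₂.length = n) :
    descCone k c₁ ∩ descCone k c₂ = ∅ ↔
      (rt k c₁ ≠ rt k c₂ ∧
        (rt k '' descCone k c₁) ∩ (rt k '' descCone k c₂) = ∅) := by
  constructor
  · intro hdis
    have key : ∀ w₁ w₂ : List (ZMod q), w₁ ∈ descCone k c₁ → w₂ ∈ descCone k c₂ →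
        rt k w₁ ≠ rt k w₂ := by
      intro w₁ w₂ hw₁ hw₂ heq
      obtain ⟨z, hz1, hz2⟩ := common_of_rt_eq hk heq
      have hz : z ∈ descCone k c₁ ∩ descCone k c₂ :=
        ⟨cone_closed hw₁ hz1, cone_closed hw₂ hz2⟩
      rw [hdis] at hz
      exact hz
    refine ⟨key c₁ c₂ (self_mem_cone c₁) (self_mem_cone c₂), ?_⟩
    ext r
    simp only [Set.mem_inter_iff, Set.mem_image, Set.mem_empty_iff_false, iff_false, not_and]
    rintro ⟨w₁, hw₁, rfl⟩ ⟨w₂, hw₂, he⟩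
    exact key w₁ w₂ hw₁ hw₂ he.symm
  · rintro ⟨-, himg⟩
    ext w
    simp only [Set.mem_inter_iff, Set.mem_empty_iff_false, iff_false, not_and]
    intro hw₁ hw₂
    have hmem : rt k w ∈ (rt k '' descCone k c₁) ∩ (rt k '' descCone k c₂) :=
      ⟨⟨w, hw₁, rfl⟩, ⟨w, hw₂, rfl⟩⟩
    rw [himg] at hmem
    exact hmem

end NoisyDup
end
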